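/- Let G be a group with a poison subgroup ⟨φ₁,φ₂⟩ of Aut(G) with respect to x₁, x₂, x₃, and let αᵢ denote conjugation by xᵢ. Then the subgroup ⟨α₁, α₂, α₃⟩ is normal in H = ⟨φ₁, φ₂, α₁, α₂, α₃⟩, and there is a split short exact sequence 1 → ⟨α₁,α₂,α₃⟩ → H → ⟨φ₁,φ₂⟩ → 1. -/

import Mathlib

private lemma list_cons_eq_append {β : Type*} :
    ∀ (L : List β) {a b : β}, a :: L = L ++ [b] → a = b ∧ L = List.replicate L.length a
  | [], a, b, h => by simp_all
  | c :: t, a, b, h => by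
    simp only [List.cons_append, List.cons.injEq] at h
    obtain ⟨rfl, h2⟩ := h
    obtain ⟨h3, h4⟩ := list_cons_eq_append t h2
    refine ⟨h3, ?_⟩
    simp only [List.length_cons, List.replicate_succ]
    exact congrArg _ h4

private lemma invRev_cons {α : Type*} (p : α × Bool) (M : List (α × Bool)) :
    FreeGroup.invRev (p :: M) = FreeGroup.invRev M ++ [(p.1, !p.2)] := by
  simp [FreeGroup.invRev]

private lemma core {α : Type*} [DecidableEq α] (i : α) (L : List (α × Bool))
    (hred : FreeGroup.reduce L = L)
    (heq : FreeGroup.reduce (L ++ [(i, true)]) = FreeGroup.reduce ((i, true) :: L)) :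
    ∃ n b, L = List.replicate n (i, b) := by
  cases hL : L with
  | nil => exact ⟨0, true, by simp⟩
  | cons hd tl =>
    subst hL
    have hrhs : FreeGroup.reduce ((i, true) :: (hd :: tl)) =
        if i = hd.1 ∧ true = !hd.2 then tl else (i, true) :: hd :: tl := by
      rw [FreeGroup.reduce.cons, hred]
    have hKred : FreeGroup.reduce (FreeGroup.invRev (hd :: tl)) = FreeGroup.invRev (hd :: tl) := by
      rw [FreeGroup.reduce_invRev, hred]
    obtain ⟨k, K', hK⟩ : ∃ k K', FreeGroup.invRev (hd :: tl) = k :: K' := by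
      cases hK : FreeGroup.invRev (hd :: tl) with
      | nil => exact absurd (congrArg List.length hK) (by simp [FreeGroup.invRev_length])
      | cons k K' => exact ⟨k, K', rfl⟩
    have hKlen : K'.length = tl.length := by
      have := congrArg List.length hK
      simp only [FreeGroup.invRev_length, List.length_cons] at this
      omega
    have hLK : (hd :: tl : List (α × Bool)) = FreeGroup.invRev K' ++ [(k.1, !k.2)] := by
      conv_lhs => rw [← FreeGroup.invRev_invRev (L₁ := hd :: tl), hK, invRev_cons]
    have hlhs : FreeGroup.reduce ((hd :: tl) ++ [(i, true)]) =
        FreeGroup.invRev (if i = k.1 ∧ false = !k.2 then K' else (i, false) :: k :: K') := by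
      have h1 : ((hd :: tl) ++ [(i, true)] : List (α × Bool)) =
          FreeGroup.invRev ((i, false) :: FreeGroup.invRev (hd :: tl)) := by
        rw [invRev_cons, FreeGroup.invRev_invRev]
        rfl
      rw [h1, FreeGroup.reduce_invRev]
      congr 1
      rw [FreeGroup.reduce.cons, hKred, hK]
    rw [hlhs, hrhs] at heq
    by_cases c1 : i = hd.1 ∧ true = !hd.2 <;> by_cases c2 : i = k.1 ∧ false = !k.2
    · -- both cancel
      rw [if_pos c1, if_pos c2] at heq
      obtain ⟨c1a, c1b⟩ := c1
      obtain ⟨c2a, c2b⟩ := c2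
      have hb : hd.2 = false := by revert c1b; cases hd.2 <;> simp
      have hhd : hd = (i, false) := by
        rw [Prod.ext_iff]; exact ⟨c1a.symm, hb⟩
      have hk : ((k.1, !k.2) : α × Bool) = (i, false) := by
        rw [Prod.ext_iff]; exact ⟨c2a.symm, c2b.symm⟩
      rw [heq, hk] at hLK
      obtain ⟨h3, h4⟩ := list_cons_eq_append tl hLK
      exact ⟨tl.length + 1, false, by rw [List.replicate_succ, ← hhd, ← h4]⟩
    · -- c1 pos, c2 neg : length contradiction
      rw [if_pos c1, if_neg c2] at heq
      have := congrArg List.length heq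
      simp only [FreeGroup.invRev_length, List.length_cons] at this
      omega
    · rw [if_neg c1, if_pos c2] at heq
      have := congrArg List.length heq
      simp only [FreeGroup.invRev_length, List.length_cons] at this
      omega
    · rw [if_neg c1, if_neg c2] at heq
      rw [invRev_cons, ← hK, FreeGroup.invRev_invRev,
        show (((i, false).1, !(i, false).2) : α × Bool) = (i, true) from rfl] at heq
      obtain ⟨h3, h4⟩ := list_cons_eq_append (hd :: tl) heq.symm
      exact ⟨(hd :: tl).length, true, h4⟩

private lemma comm_toWord_replicate {α : Type*} [DecidableEq α] {i : α} {w : FreeGroup α}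
    (h : w * FreeGroup.of i = FreeGroup.of i * w) :
    ∃ n b, w.toWord = List.replicate n (i, b) := by
  have hof : (FreeGroup.of i : FreeGroup α) = FreeGroup.mk [(i, true)] := by
    rw [← FreeGroup.toWord_of i, FreeGroup.mk_toWord]
  have hmk : FreeGroup.mk (w.toWord ++ [(i, true)]) = FreeGroup.mk ((i, true) :: w.toWord) := by
    rw [← FreeGroup.mul_mk, FreeGroup.mk_toWord, ← hof, h, hof]
    rw [show ((i, true) :: w.toWord = [(i, true)] ++ w.toWord) from rfl, ← FreeGroup.mul_mk,
      FreeGroup.mk_toWord]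
  exact core i w.toWord w.reduce_toWord (FreeGroup.reduce.sound hmk)

private lemma free_commute_two {α : Type*} [DecidableEq α] {i j : α} (hij : i ≠ j)
    {w : FreeGroup α} (hi : w * FreeGroup.of i = FreeGroup.of i * w)
    (hj : w * FreeGroup.of j = FreeGroup.of j * w) : w = 1 := by
  obtain ⟨n, b, hn⟩ := comm_toWord_replicate hi
  obtain ⟨m, c, hm⟩ := comm_toWord_replicate hj
  rw [← FreeGroup.toWord_eq_nil_iff]
  cases n with
  | zero => simpa using hn
  | succ n =>
    cases m with
    | zero => simpa using hm
    | succ m =>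
      rw [hn] at hm
      simp [List.replicate_succ, Prod.ext_iff] at hm
      exact absurd hm.1.1 hij

private lemma conj_mulaut {G : Type} [Group G] (ψ : MulAut G) (g : G) :
    ψ * MulAut.conj g * ψ⁻¹ = MulAut.conj (ψ g) := by
  ext h
  simp [MulAut.mul_apply, MulAut.conj_apply, map_mul, map_inv, MulAut.apply_inv_self]

theorem stmt4 {G : Type} [Group G] (x : Fin 3 → G)
    (hx : Function.Injective (FreeGroup.lift x))
    (φ : Fin 2 → MulAut G)
    (hfix : ∀ i j : Fin 2, φ i (x j.castSucc) = x j.castSucc)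
    (hx3 : ∀ i : Fin 2, φ i (x 2) = x 2 * x i.castSucc) :
    ∀ (A H Φ : Subgroup (MulAut G)),
      A = Subgroup.closure (Set.range fun i : Fin 3 => MulAut.conj (x i)) →
      Φ = Subgroup.closure (Set.range φ) →
      H = Subgroup.closure (Set.range φ ∪ (Set.range fun i : Fin 3 => MulAut.conj (x i))) →
      A ≤ H ∧ (A.subgroupOf H).Normal ∧
        ∃ (π : ↥H →* ↥Φ) (s : ↥Φ →* ↥H),
          Function.Surjective π ∧ π.ker = A.subgroupOf H ∧
            π.comp s = MonoidHom.id ↥Φ := by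
  intro A H Φ hA hΦ hH
  classical
  set N : Subgroup G := Subgroup.closure (Set.range x) with hN
  have hA2 : A = N.map (MulAut.conj : G →* MulAut G) := by
    rw [hA, hN, MonoidHom.map_closure, ← Set.range_comp]
    rfl
  have hxN : ∀ i : Fin 3, x i ∈ N := fun i => Subgroup.subset_closure ⟨i, rfl⟩
  have hlast : (Fin.last 2 : Fin 3) = 2 := by decide
  have hφmem : ∀ k : Fin 2, ∀ g ∈ N, φ k g ∈ N := by
    intro k g hg
    refine Subgroup.closure_induction (p := fun g _ => φ k g ∈ N) ?_ ?_ ?_ ?_ hg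
    · rintro _ ⟨j, rfl⟩
      refine Fin.lastCases ?_ ?_ j
      · rw [hlast, hx3 k]
        exact mul_mem (hxN 2) (hxN k.castSucc)
      · intro j'; rw [hfix k j']; exact hxN _
    · simpa using one_mem N
    · intro a b _ _ ha hb; rw [map_mul]; exact mul_mem ha hb
    · intro a _ ha; rw [map_inv]; exact inv_mem ha
  have hφinvmem : ∀ k : Fin 2, ∀ g ∈ N, (φ k)⁻¹ g ∈ N := by
    intro k g hg
    refine Subgroup.closure_induction (p := fun g _ => (φ k)⁻¹ g ∈ N) ?_ ?_ ?_ ?_ hg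
    · rintro _ ⟨j, rfl⟩
      refine Fin.lastCases ?_ ?_ j
      · have hh : (φ k)⁻¹ (x (Fin.last 2)) = x 2 * (x k.castSucc)⁻¹ := by
          apply (φ k).injective
          rw [MulAut.apply_inv_self, map_mul, map_inv, hx3 k, hfix k k, hlast]
          group
        rw [hh]; exact mul_mem (hxN 2) (inv_mem (hxN _))
      · intro j'
        have hh : (φ k)⁻¹ (x j'.castSucc) = x j'.castSucc := by
          apply (φ k).injective
          rw [MulAut.apply_inv_self, hfix k j']
        rw [hh]; exact hxN _
    · simpa using one_mem N
    · intro a b _ _ ha hb; rw [map_mul]; exact mul_mem ha hb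
    · intro a _ ha; rw [map_inv]; exact inv_mem ha
  have hnormalizer : ∀ ψ : MulAut G, (∀ g ∈ N, ψ g ∈ N) → (∀ g ∈ N, ψ⁻¹ g ∈ N) →
      ψ ∈ Subgroup.normalizer (A : Set (MulAut G)) := by
    intro ψ h1 h2
    rw [Subgroup.mem_normalizer_iff]
    intro a
    rw [hA2]
    constructor
    · intro ha
      obtain ⟨g, hg, rfl⟩ := Subgroup.mem_map.mp ha
      exact Subgroup.mem_map.mpr ⟨ψ g, h1 g hg, (conj_mulaut ψ g).symm⟩
    · intro ha
      obtain ⟨g, hg, hgeq⟩ := Subgroup.mem_map.mp ha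
      refine Subgroup.mem_map.mpr ⟨ψ⁻¹ g, h2 g hg, ?_⟩
      have hcc := conj_mulaut ψ⁻¹ g
      rw [inv_inv] at hcc
      rw [← hcc, hgeq]
      group
  have hHsubN : H ≤ Subgroup.normalizer (A : Set (MulAut G)) := by
    rw [hH]
    refine (Subgroup.closure_le _).mpr ?_
    rintro ψ (⟨k, rfl⟩ | ⟨i, rfl⟩)
    · exact hnormalizer _ (hφmem k) (hφinvmem k)
    · refine hnormalizer _ ?_ ?_
      · intro g hg
        rw [MulAut.conj_apply]
        exact mul_mem (mul_mem (hxN i) hg) (inv_mem (hxN i))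
      · intro g hg
        rw [← map_inv, MulAut.conj_apply, inv_inv]
        exact mul_mem (mul_mem (inv_mem (hxN i)) hg) (hxN i)
  have hAH : A ≤ H := by
    rw [hA, hH]; exact Subgroup.closure_mono Set.subset_union_right
  have hΦH : Φ ≤ H := by
    rw [hΦ, hH]; exact Subgroup.closure_mono Set.subset_union_left
  have hnormal : (A.subgroupOf H).Normal := by
    constructor
    intro n hn g
    rw [Subgroup.mem_subgroupOf] at hn ⊢
    have hng := Subgroup.mem_normalizer_iff.mp (hHsubN g.2) (n : MulAut G)
    have hout : ((g : MulAut G) * n * (g : MulAut G)⁻¹) ∈ A := hng.mp hn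
    simpa using hout
  have hΦfix : ∀ ψ ∈ Φ, ∀ j : Fin 2, ψ (x j.castSucc) = x j.castSucc := by
    intro ψ hψ
    rw [hΦ] at hψ
    refine Subgroup.closure_induction
      (p := fun ψ _ => ∀ j : Fin 2, ψ (x j.castSucc) = x j.castSucc) ?_ ?_ ?_ ?_ hψ
    · rintro _ ⟨k, rfl⟩ j; exact hfix k j
    · intro j; rfl
    · intro a b _ _ ha hb j; rw [MulAut.mul_apply, hb j, ha j]
    · intro a _ ha j
      conv_lhs => rw [← ha j]
      exact MulAut.inv_apply_self _ a _
  have htriv : ∀ ψ, ψ ∈ A → ψ ∈ Φ → ψ = 1 := by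
    intro ψ hψA hψΦ
    rw [hA2] at hψA
    obtain ⟨g, hgN, rfl⟩ := Subgroup.mem_map.mp hψA
    have hgr : g ∈ (FreeGroup.lift x).range := by
      rw [FreeGroup.range_lift_eq_closure]; exact hgN
    obtain ⟨w, rfl⟩ := MonoidHom.mem_range.mp hgr
    have hc : ∀ j : Fin 2,
        (FreeGroup.lift x) w * x j.castSucc = x j.castSucc * (FreeGroup.lift x) w := by
      intro j
      have h' := hΦfix _ hψΦ j
      rw [MulAut.conj_apply] at h'
      exact mul_inv_eq_iff_eq_mul.mp h'
    have hw : w = 1 := by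
      refine free_commute_two
        (i := ((0 : Fin 2).castSucc)) (j := ((1 : Fin 2).castSucc)) (by decide) ?_ ?_
      · apply hx; rw [map_mul, map_mul, FreeGroup.lift_apply_of]; exact hc 0
      · apply hx; rw [map_mul, map_mul, FreeGroup.lift_apply_of]; exact hc 1
    rw [hw, map_one, map_one]
  haveI : (A.subgroupOf H).Normal := hnormal
  let q : ↥H →* ↥H ⧸ A.subgroupOf H := QuotientGroup.mk' (A.subgroupOf H)
  let ι : ↥Φ →* ↥H ⧸ A.subgroupOf H := q.comp (Subgroup.inclusion hΦH)
  have hιinj : Function.Injective ι := by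
    rw [injective_iff_map_eq_one]
    intro a ha
    have h1 : (Subgroup.inclusion hΦH a) ∈ q.ker := MonoidHom.mem_ker.mpr ha
    rw [QuotientGroup.ker_mk'] at h1
    have h2 : (a : MulAut G) ∈ A := Subgroup.mem_subgroupOf.mp h1
    exact Subtype.ext (htriv _ h2 a.2)
  have hker1 : ∀ (g : MulAut G) (hg : g ∈ H), g ∈ A → q ⟨g, hg⟩ ∈ ι.range := by
    intro g hg hgA
    have hk : (⟨g, hg⟩ : ↥H) ∈ q.ker := by
      rw [QuotientGroup.ker_mk']
      exact Subgroup.mem_subgroupOf.mpr hgA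
    rw [MonoidHom.mem_ker] at hk
    rw [hk]
    exact one_mem _
  have hιsurj : Function.Surjective ι := by
    have key : ∀ h : ↥H, q h ∈ ι.range := by
      rintro ⟨h, hh⟩
      have hh' : h ∈ Subgroup.closure
          (Set.range φ ∪ Set.range fun i : Fin 3 => MulAut.conj (x i)) := by
        rw [← hH]; exact hh
      refine Subgroup.closure_induction
        (p := fun g hg => q ⟨g, by rw [hH]; exact hg⟩ ∈ ι.range) ?_ ?_ ?_ ?_ hh'
      · rintro ψ (⟨k, rfl⟩ | ⟨i, rfl⟩)
        · exact ⟨⟨φ k, by rw [hΦ]; exact Subgroup.subset_closure ⟨k, rfl⟩⟩, rfl⟩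
        · refine hker1 _ _ ?_
          rw [hA]; exact Subgroup.subset_closure ⟨i, rfl⟩
      · show q 1 ∈ ι.range
        rw [map_one]; exact one_mem _
      · intro a b ha hb hqa hqb
        have := mul_mem hqa hqb
        rwa [← map_mul] at this
      · intro a ha hqa
        have := inv_mem hqa
        rwa [← map_inv] at this
    intro y
    obtain ⟨h, rfl⟩ := QuotientGroup.mk'_surjective (A.subgroupOf H) y
    exact MonoidHom.mem_range.mp (key h)
  let e : ↥Φ ≃* ↥H ⧸ A.subgroupOf H := MulEquiv.ofBijective ι ⟨hιinj, hιsurj⟩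
  refine ⟨hAH, hnormal, e.symm.toMonoidHom.comp q, Subgroup.inclusion hΦH, ?_, ?_, ?_⟩
  · have hs : Function.Surjective (⇑e.symm ∘ ⇑q) :=
      e.symm.surjective.comp (QuotientGroup.mk'_surjective _)
    exact hs
  · have hker : q.ker = A.subgroupOf H := QuotientGroup.ker_mk' _
    ext z
    rw [MonoidHom.mem_ker]
    have hz : (e.symm.toMonoidHom.comp q) z = e.symm (q z) := rfl
    rw [hz, MulEquiv.map_eq_one_iff]
    have hmem : z ∈ q.ker ↔ z ∈ A.subgroupOf H := by rw [hker]
    exact (MonoidHom.mem_ker (f := q)).symm.trans hmem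
  · refine MonoidHom.ext fun a => ?_
    show e.symm (ι a) = a
    have : ι a = e a := rfl
    rw [this]
    exact e.symm_apply_apply a
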